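/- If p is bilevel feasible, witnessed by toll vector T, then for every other s-t path q that uses a subset of p's tolled arcs, the base cost of q is at least the base cost of p minus the total toll p pays on tolled arcs not used by q; in particular, if two distinct bilevel feasible paths have the same set of tolled arcs, their cost difference under any toll vector equals the difference of their base costs, so at most one of them can be the unique optimum for any given toll vector. -/
import Mathlib


/-- If `p` is bilevel feasible witnessed by tolls `T`, then any path `q` using a
subset of `p`'s tolled arcs has base cost at least the base cost of `p` minus the
tolls `p` pays on tolled arcs not used by `q`.  Moreover, two paths with the same
tolled-arc set have, under any toll vector, a cost difference equal to the difference
of their base costs; hence at most one of two distinct such paths can be the unique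
optimum for a given toll vector. -/
theorem bilevel_feasible_bound {A : Type*} [DecidableEq A]
    (A1 : Finset A) (c : A → ℝ) (hc : ∀ a, 0 < c a)
    (P : Finset (Finset A)) (p q : Finset A) (hp : p ∈ P) (hq : q ∈ P)
    (T : A → ℝ) (hT : ∀ a, 0 ≤ T a)
    (hopt : ∀ r ∈ P, (∑ a ∈ p, c a + ∑ a ∈ p ∩ A1, T a) ≤ (∑ a ∈ r, c a + ∑ a ∈ r ∩ A1, T a)) :
    ((q ∩ A1 ⊆ p ∩ A1) →
      (∑ a ∈ p, c a) - ∑ a ∈ (p ∩ A1) \ (q ∩ A1), T a ≤ ∑ a ∈ q, c a) ∧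
    (p ∩ A1 = q ∩ A1 →
      ∀ T' : A → ℝ,
        (∑ a ∈ p, c a + ∑ a ∈ p ∩ A1, T' a) - (∑ a ∈ q, c a + ∑ a ∈ q ∩ A1, T' a)
          = (∑ a ∈ p, c a) - (∑ a ∈ q, c a)) ∧
    (p ∩ A1 = q ∩ A1 → p ≠ q →
      ¬ ((∀ r ∈ P, r ≠ p → (∑ a ∈ p, c a + ∑ a ∈ p ∩ A1, T a) < (∑ a ∈ r, c a + ∑ a ∈ r ∩ A1, T a)) ∧
         (∀ r ∈ P, r ≠ q → (∑ a ∈ q, c a + ∑ a ∈ q ∩ A1, T a) < (∑ a ∈ r, c a + ∑ a ∈ r ∩ A1, T a)))) := by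
  refine ⟨?_, ?_, ?_⟩
  · intro hsub
    have h := hopt q hq
    have hsplit : ∑ a ∈ p ∩ A1, T a = ∑ a ∈ q ∩ A1, T a + ∑ a ∈ (p ∩ A1) \ (q ∩ A1), T a := by
      rw [add_comm, Finset.sum_sdiff hsub]
    rw [hsplit] at h
    have hW0 : 0 ≤ ∑ a ∈ (p ∩ A1) \ (q ∩ A1), T a :=
      Finset.sum_nonneg fun a _ => hT a
    linarith
  · intro heq T'
    rw [heq]; ring
  · intro heq hne ⟨h1, h2⟩
    have a1 := h1 q hq (Ne.symm hne)
    have a2 := h2 p hp hne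
    linarith
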